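/- Let r ≥ 2 be even, and let C' ∩ L_0 = {(x,0) : x mod 3r ∉ {1,3,5,…,r−1}}. If u, v ∈ L_0 with u ≠ v and neither u nor v in C', then the distance in the hexagonal grid between u and v is either strictly less than r or at least 2r+2. In particular: (a) if u and v are adjacent then at least one lies in C'; (b) if r ≤ d(u,v) ≤ 2r+1 then at least one of u, v lies in C'. -/

import Mathlib

/-- The hexagonal grid in its brick wall representation: vertex set ℤ×ℤ,
with (x,y) adjacent to (x±1,y) always, and to (x,y+1) if x+y is even
(equivalently, to (x,y-1) if x+y is odd). -/
def hexGraph : SimpleGraph (ℤ × ℤ) where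
  Adj u v := (u.2 = v.2 ∧ (u.1 = v.1 + 1 ∨ v.1 = u.1 + 1)) ∨
    (u.1 = v.1 ∧ ((v.2 = u.2 + 1 ∧ Even (u.1 + u.2)) ∨ (u.2 = v.2 + 1 ∧ Even (v.1 + v.2))))
  symm := by
    constructor
    rintro u v (⟨h1, h2 | h2⟩ | ⟨h1, ⟨h2, h3⟩ | ⟨h2, h3⟩⟩)
    · exact Or.inl ⟨h1.symm, Or.inr h2⟩
    · exact Or.inl ⟨h1.symm, Or.inl h2⟩
    · exact Or.inr ⟨h1.symm, Or.inr ⟨h2, h3⟩⟩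
    · exact Or.inr ⟨h1.symm, Or.inl ⟨h2, h3⟩⟩
  loopless := by constructor; rintro ⟨x, y⟩ (⟨_, h | h⟩ | ⟨_, ⟨h, _⟩ | ⟨h, _⟩⟩) <;> omega

/-- The graph distance from a vertex to the horizontal line L_k = {(x,k) : x ∈ ℤ}. -/
noncomputable def hexLineDist (u : ℤ × ℤ) (k : ℤ) : ℕ :=
  sInf {n : ℕ | ∃ x : ℤ, hexGraph.dist u (x, k) = n}

/-- Membership of the column x in the row codeword set for even r:
x mod 3r is not one of the excluded odd residues 1,3,…,r−1. -/
def inCodeRowEven (r x : ℤ) : Prop := ¬ (Odd (x % (3 * r)) ∧ x % (3 * r) < r)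

lemma hex_walk_lb : ∀ {a b : ℤ × ℤ} (p : hexGraph.Walk a b),
    (a.1 - b.1).natAbs ≤ p.length := by
  intro a b p
  induction p with
  | nil => simp
  | @cons a c b h p ih =>
    have h' : a.1 = c.1 + 1 ∨ c.1 = a.1 + 1 ∨ a.1 = c.1 := by
      rcases h with ⟨_, h | h⟩ | ⟨h, _⟩ <;> omega
    simp only [SimpleGraph.Walk.length_cons]
    omega

lemma hex_row_walk : ∀ (n : ℕ) (u v : ℤ), (u - v).natAbs = n →
    ∃ p : hexGraph.Walk ((u, 0) : ℤ × ℤ) (v, 0), p.length = n := by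
  intro n
  induction n with
  | zero =>
    intro u v h
    have : u = v := by omega
    subst this; exact ⟨.nil, rfl⟩
  | succ n ih =>
    intro u v h
    rcases lt_or_gt_of_ne (show u ≠ v by omega) with hlt | hgt
    · obtain ⟨p, hp⟩ := ih (u + 1) v (by omega)
      have hadj : hexGraph.Adj (u, 0) (u + 1, 0) := Or.inl ⟨rfl, Or.inr rfl⟩
      exact ⟨.cons hadj p, by simp [hp]⟩
    · obtain ⟨p, hp⟩ := ih (u - 1) v (by omega)
      have hadj : hexGraph.Adj (u, 0) ((u - 1 : ℤ), 0) := Or.inl ⟨rfl, Or.inl (by ring)⟩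
      exact ⟨.cons hadj p, by simp [hp]⟩

lemma hex_row_dist (u v : ℤ) : hexGraph.dist (u, 0) (v, 0) = (u - v).natAbs := by
  obtain ⟨p, hp⟩ := hex_row_walk (u - v).natAbs u v rfl
  refine le_antisymm (hp ▸ SimpleGraph.dist_le p) ?_
  obtain ⟨q, hq⟩ := (SimpleGraph.Walk.reachable p).exists_walk_length_eq_dist
  calc (u - v).natAbs = ((u,(0:ℤ)).1 - (v,(0:ℤ)).1).natAbs := rfl
    _ ≤ q.length := hex_walk_lb q
    _ = _ := hq

lemma hex_key (r u v : ℤ) (hr : 2 ≤ r)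
    (hu : Odd (u % (3 * r)) ∧ u % (3 * r) < r)
    (hv : Odd (v % (3 * r)) ∧ v % (3 * r) < r) :
    (u - v).natAbs ≤ r - 2 ∨ 2 * r + 2 ≤ ((u - v).natAbs : ℤ) := by
  set m := 3 * r with hm
  have hm0 : 0 < m := by omega
  have hua : u % m % 2 = 1 := Int.odd_iff.mp hu.1
  have hva : v % m % 2 = 1 := Int.odd_iff.mp hv.1
  have hub : 0 ≤ u % m := Int.emod_nonneg u (by omega)
  have hvb : 0 ≤ v % m := Int.emod_nonneg v (by omega)
  have hud : m * (u / m) + u % m = u := Int.mul_ediv_add_emod u m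
  have hvd : m * (v / m) + v % m = v := Int.mul_ediv_add_emod v m
  set k := u / m - v / m with hk
  have hdiff : u - v = m * k + (u % m - v % m) := by
    rw [hk, mul_sub]; omega
  rcases lt_trichotomy k 0 with h | h | h
  · have : m * k ≤ m * (-1) := by
      apply mul_le_mul_of_nonneg_left (by omega) (by omega)
    right
    have h1 : u - v ≤ -(2 * r + 2) := by omega
    omega
  · left; rw [h] at hdiff; omega
  · have : m * 1 ≤ m * k := by
      apply mul_le_mul_of_nonneg_left (by omega) (by omega)
    right
    have h1 : 2 * r + 2 ≤ u - v := by omega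
    omega

/-- for even r ≥ 2, non-codewords on L₀ are at distance < r or ≥ 2r+2;
in particular adjacent vertices of L₀ contain a codeword, and any two vertices of L₀
at distance between r and 2r+1 contain a codeword. -/
theorem hex_codeword_row_even (r : ℤ) (hr : 2 ≤ r) (hre : Even r) :
    (∀ u v : ℤ, u ≠ v → ¬ inCodeRowEven r u → ¬ inCodeRowEven r v →
      (hexGraph.dist (u, 0) (v, 0) : ℤ) < r ∨
        2 * r + 2 ≤ (hexGraph.dist (u, 0) (v, 0) : ℤ)) ∧
    (∀ u v : ℤ, hexGraph.Adj (u, 0) (v, 0) → inCodeRowEven r u ∨ inCodeRowEven r v) ∧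
    (∀ u v : ℤ, r ≤ (hexGraph.dist (u, 0) (v, 0) : ℤ) →
      (hexGraph.dist (u, 0) (v, 0) : ℤ) ≤ 2 * r + 1 →
      inCodeRowEven r u ∨ inCodeRowEven r v) := by
  have main : ∀ u v : ℤ, ¬ inCodeRowEven r u → ¬ inCodeRowEven r v →
      (hexGraph.dist (u, 0) (v, 0) : ℤ) < r ∨
        2 * r + 2 ≤ (hexGraph.dist (u, 0) (v, 0) : ℤ) := by
    intro u v hu hv
    rw [inCodeRowEven, not_not] at hu hv
    have := hex_key r u v hr hu hv
    rw [hex_row_dist]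
    omega
  refine ⟨fun u v _ => main u v, ?_, ?_⟩
  · intro u v hadj
    by_contra hc
    push_neg at hc
    obtain ⟨hu, hv⟩ := hc
    rw [inCodeRowEven, not_not] at hu hv
    have h1 : u = v + 1 ∨ v = u + 1 := by
      rcases hadj with ⟨_, h⟩ | ⟨_, ⟨h, _⟩ | ⟨h, _⟩⟩ <;> simp_all
    set m := 3 * r with hm
    have hud : m * (u / m) + u % m = u := Int.mul_ediv_add_emod u m
    have hvd : m * (v / m) + v % m = v := Int.mul_ediv_add_emod v m
    have hua : u % m % 2 = 1 := Int.odd_iff.mp hu.1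
    have hva : v % m % 2 = 1 := Int.odd_iff.mp hv.1
    have he1 : (m * (u / m)) % 2 = 0 := Int.even_iff.mp ((hre.mul_left 3).mul_right _)
    have he2 : (m * (v / m)) % 2 = 0 := Int.even_iff.mp ((hre.mul_left 3).mul_right _)
    omega
  · intro u v h1 h2
    by_contra hc
    push_neg at hc
    rcases main u v hc.1 hc.2 with h | h <;> omega
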